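/- Fix ℓ ≥ 2. Let D : ℤ → ℚ with D(L) = 0 for L ≤ 0 and (L+ℓ−1)·D(L) = ∑_{k=1}^{L+ℓ−1} (D(k−ℓ) + 1 + D(L−k)) for L ≥ 1. Then D(L) = (2L + ℓ − 1)/(ℓ + 1) for all L ≥ 1. -/
import Mathlib


/-- Average number of `ℓ`-mers in random sequential covering of an interval of `L` sites:
with `D L = 0` for `L ≤ 0` and the recurrence
`(L+ℓ-1) D L = ∑_{k=1}^{L+ℓ-1} (D (k-ℓ) + 1 + D (L-k))`, one has
`D L = (2L + ℓ - 1)/(ℓ + 1)` for all `L ≥ 1`. -/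
theorem ellmer_average (ℓ : ℕ) (hℓ : 2 ≤ ℓ) (D : ℤ → ℚ)
    (h0 : ∀ L : ℤ, L ≤ 0 → D L = 0)
    (hrec : ∀ L : ℤ, 1 ≤ L →
      ((L : ℚ) + ℓ - 1) * D L =
        ∑ k ∈ Finset.Icc (1 : ℤ) (L + ℓ - 1), (D (k - ℓ) + 1 + D (L - k))) :
    ∀ L : ℤ, 1 ≤ L → D L = (2 * (L : ℚ) + ℓ - 1) / (ℓ + 1) := by
  -- split off the top element of an integer Icc
  have htop : ∀ (f : ℤ → ℚ) (a b : ℤ), a ≤ b + 1 →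
      ∑ k ∈ Finset.Icc a (b+1), f k = ∑ k ∈ Finset.Icc a b, f k + f (b+1) := by
    intro f a b hab
    rw [show Finset.Icc a (b+1) = insert (b+1) (Finset.Icc a b) from by
        ext x; simp only [Finset.mem_insert, Finset.mem_Icc]; omega,
      Finset.sum_insert (by simp only [Finset.mem_Icc]; omega)]
    ring
  -- reflection lemma for sums of D
  have hsum : ∀ (c a b : ℤ), ∑ k ∈ Finset.Icc a b, D (c - k) = ∑ j ∈ Finset.Icc (c - b) (c - a), D j := by
    intro c a b
    refine Finset.sum_nbij' (fun k => c - k) (fun j => c - j) ?_ ?_ ?_ ?_ ?_ <;>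
      simp only [Finset.mem_Icc] <;> intros <;> first | trivial | omega
  -- drop a low endpoint below 1
  have hlow : ∀ a b : ℤ, a ≤ 1 → ∑ j ∈ Finset.Icc a b, D j = ∑ j ∈ Finset.Icc 1 b, D j := by
    intro a b ha
    refine (Finset.sum_subset (Finset.Icc_subset_Icc_left ha) ?_).symm
    intro j hj hj2
    simp only [Finset.mem_Icc] at hj hj2
    exact h0 j (by omega)
  -- cardinality of Icc as a rational
  have hcard : ∀ a b : ℤ, a ≤ b + 1 → ((Finset.Icc a b).card : ℚ) = (b : ℚ) + 1 - a := by
    intro a b hab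
    rw [Int.card_Icc]
    have h1 : (((b + 1 - a).toNat : ℤ) : ℚ) = (((b + 1 - a : ℤ)) : ℚ) := by
      rw [Int.toNat_of_nonneg (by omega)]
    push_cast at h1 ⊢
    linarith
  have hℓQ : (2 : ℚ) ≤ (ℓ : ℚ) := by exact_mod_cast hℓ
  -- base case: D 1 = 1
  have hbase : D 1 = 1 := by
    have h := hrec 1 le_rfl
    rw [show (1 : ℤ) + ℓ - 1 = (ℓ : ℤ) by ring] at h
    rw [Finset.sum_congr rfl (fun k hk => show D (k - ℓ) + 1 + D (1 - k) = (1:ℚ) from by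
      simp only [Finset.mem_Icc] at hk
      rw [h0 (k - ℓ) (by omega), h0 (1 - k) (by omega)]; ring)] at h
    rw [Finset.sum_const, nsmul_eq_mul, hcard 1 ℓ (by omega)] at h
    push_cast at h
    have : (ℓ:ℚ) * D 1 = (ℓ:ℚ) * 1 := by linarith
    exact mul_left_cancel₀ (by linarith) this
  -- step recurrence
  have hstep : ∀ L : ℤ, 1 ≤ L → ((L:ℚ) + ℓ) * D (L+1) = ((L:ℚ) + ℓ + 1) * D L + 1 := by
    intro L hL
    have h1 := hrec L hL
    have h2 := hrec (L+1) (by omega)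
    rw [show L + 1 + (ℓ:ℤ) - 1 = (L + (ℓ:ℤ) - 1) + 1 by ring] at h2
    rw [htop _ 1 (L + (ℓ:ℤ) - 1) (by omega)] at h2
    simp only [Finset.sum_add_distrib, Finset.sum_const, nsmul_eq_mul] at h1 h2
    have key1 : ∑ k ∈ Finset.Icc (1:ℤ) (L+(ℓ:ℤ)-1), D (L+1-k) = ∑ j ∈ Finset.Icc (1:ℤ) L, D j := by
      rw [hsum (L+1) 1 (L+(ℓ:ℤ)-1),
        show L+1-(L+(ℓ:ℤ)-1) = 2-(ℓ:ℤ) by ring, show L+1-1 = L by ring]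
      exact hlow _ _ (by omega)
    have key2 : ∑ k ∈ Finset.Icc (1:ℤ) (L+(ℓ:ℤ)-1), D (L-k) = ∑ j ∈ Finset.Icc (1:ℤ) (L-1), D j := by
      rw [hsum L 1 (L+(ℓ:ℤ)-1),
        show L-(L+(ℓ:ℤ)-1) = 1-(ℓ:ℤ) by ring]
      exact hlow _ _ (by omega)
    have key3 : ∑ j ∈ Finset.Icc (1:ℤ) L, D j = ∑ j ∈ Finset.Icc (1:ℤ) (L-1), D j + D L := by
      have h := htop D 1 (L-1) (by omega)
      rw [show L-1+1 = L by ring] at h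
      exact h
    rw [key1, key3] at h2
    rw [key2] at h1
    rw [hcard 1 (L+(ℓ:ℤ)-1) (by omega)] at h1 h2
    rw [show L+(ℓ:ℤ)-1+1-(ℓ:ℤ) = L by ring, h0 (L+1-(L+(ℓ:ℤ)-1+1)) (by omega)] at h2
    push_cast at h1 h2
    linarith
  -- main induction
  refine Int.le_induction ?_ ?_
  · rw [hbase]
    have hd : (ℓ:ℚ) + 1 ≠ 0 := by positivity
    field_simp
    ring
  · intro n hn ih
    have hs := hstep n hn
    rw [ih] at hs
    have hn' : (1:ℚ) ≤ (n:ℚ) := by exact_mod_cast hn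
    have hne : ((n:ℚ) + ℓ) ≠ 0 := by linarith
    have hd : (ℓ:ℚ) + 1 ≠ 0 := by positivity
    have hval : D (n+1) = (2*(n:ℚ)+ℓ+1)/(ℓ+1) := by
      refine mul_left_cancel₀ hne ?_
      rw [hs]
      field_simp
      ring
    rw [hval]
    push_cast
    ring_nf
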